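/- Let d : ZMod N → ℤ be a discrepancy function with |{x : d x ≠ 0}| ≥ N/8, i.e. P errs on at least 1/8 of the inputs. Define p₁ := |{x : d x + d (−x) ≠ 0}| / N and p₂ := |{(x, y) ∈ ZMod N × ZMod N : d y + d (x − y) ≠ d x}| / N². Then (1 − p₁)^96 · (1 − p₂)^709 ≤ 1/4. (Hence the self-testing algorithm, which runs the first test k₁ = 96 times and the RandSplit test k₂ = 709 times on independent uniform random choices, passes with probability at most 1/4, i.e. returns FAIL with probability at least 3/4.) -/

import Mathlib

open Finset

private lemma card_filter_equiv' {α β : Type*} [Fintype α] [Fintype β]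
    (σ : α ≃ β) (Q : β → Prop) [DecidablePred Q] :
    (univ.filter fun a => Q (σ a)).card = (univ.filter Q).card := by
  apply Finset.card_bij (fun a _ => σ a)
  · intro a ha; simp_all
  · intro a _ b _ h; exact σ.injective h
  · intro b hb; exact ⟨σ.symm b, by simp_all, by simp⟩

private lemma card_filter_prod' {α : Type*} [Fintype α] (R : α → α → Prop)
    [∀ y z, Decidable (R y z)] :
    (univ.filter fun p : α × α => R p.1 p.2).card
      = ∑ y : α, (univ.filter fun z => R y z).card := by
  simp only [Finset.card_filter]
  rw [Fintype.sum_prod_type]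

private lemma key_count (N : ℕ) [NeZero N] (d : ZMod N → ℤ)
    (hE : N ≤ 8 * (univ.filter fun x : ZMod N => d x ≠ 0).card) :
    N ^ 2 ≤ 32 * (univ.filter fun p : ZMod N × ZMod N =>
        d p.1 + d p.2 ≠ d (p.1 + p.2)).card := by
  have hN : 0 < N := Nat.pos_of_ne_zero (NeZero.ne N)
  set K := (univ.filter fun p : ZMod N × ZMod N => d p.1 + d p.2 ≠ d (p.1 + p.2)).card with hK
  by_contra hcon
  push_neg at hcon
  have hcardG : Fintype.card (ZMod N) = N := ZMod.card N
  -- Step 1: majority values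
  have step1 : ∀ x : ZMod N, ∃ c : ℤ,
      N * (univ.filter fun y : ZMod N => d y + d (x - y) ≠ c).card ≤ 2 * K := by
    intro x
    let σ₁ : (ZMod N × ZMod N) ≃ (ZMod N × ZMod N) :=
      { toFun := fun p => (p.2, p.1 - p.2)
        invFun := fun q => (q.1 + q.2, q.1)
        left_inv := by rintro ⟨a, b⟩; simp
        right_inv := by rintro ⟨a, b⟩; simp }
    let σ₂ : (ZMod N × ZMod N) ≃ (ZMod N × ZMod N) :=
      { toFun := fun p => (p.1 - p.2, x - p.1)
        invFun := fun q => (x - q.2, x - q.2 - q.1)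
        left_inv := by rintro ⟨a, b⟩; simp only [Prod.mk.injEq]; constructor <;> ring
        right_inv := by rintro ⟨a, b⟩; simp only [Prod.mk.injEq]; constructor <;> ring }
    have c1 : (univ.filter fun p : ZMod N × ZMod N =>
        d p.2 + d (p.1 - p.2) ≠ d (p.2 + (p.1 - p.2))).card = K := by
      rw [hK]
      simpa [σ₁] using card_filter_equiv' σ₁
        (fun q : ZMod N × ZMod N => d q.1 + d q.2 ≠ d (q.1 + q.2))
    have c2 : (univ.filter fun p : ZMod N × ZMod N =>
        d (p.1 - p.2) + d (x - p.1) ≠ d ((p.1 - p.2) + (x - p.1))).card = K := by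
      rw [hK]
      simpa [σ₂] using card_filter_equiv' σ₂
        (fun q : ZMod N × ZMod N => d q.1 + d q.2 ≠ d (q.1 + q.2))
    have hpair : (univ.filter fun p : ZMod N × ZMod N =>
        d p.1 + d (x - p.1) ≠ d p.2 + d (x - p.2)).card ≤ 2 * K := by
      have hsub : (univ.filter fun p : ZMod N × ZMod N =>
          d p.1 + d (x - p.1) ≠ d p.2 + d (x - p.2)) ⊆
          (univ.filter fun p : ZMod N × ZMod N =>
            d p.2 + d (p.1 - p.2) ≠ d (p.2 + (p.1 - p.2))) ∪
          (univ.filter fun p : ZMod N × ZMod N =>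
            d (p.1 - p.2) + d (x - p.1) ≠ d ((p.1 - p.2) + (x - p.1))) := by
        intro p hp
        simp only [mem_filter, mem_union, mem_univ, true_and] at *
        by_contra hc
        push_neg at hc
        obtain ⟨h1, h2⟩ := hc
        apply hp
        have e1 : p.2 + (p.1 - p.2) = p.1 := by ring
        have e2 : (p.1 - p.2) + (x - p.1) = x - p.2 := by ring
        rw [e1] at h1
        rw [e2] at h2
        omega
      calc (univ.filter fun p : ZMod N × ZMod N =>
            d p.1 + d (x - p.1) ≠ d p.2 + d (x - p.2)).card
          ≤ _ := Finset.card_le_card hsub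
        _ ≤ _ + _ := Finset.card_union_le _ _
        _ = 2 * K := by rw [c1, c2]; ring
    have hsum : ∑ y : ZMod N, (univ.filter fun z : ZMod N =>
        d y + d (x - y) ≠ d z + d (x - z)).card ≤ 2 * K := by
      rw [← card_filter_prod' (fun y z => d y + d (x - y) ≠ d z + d (x - z))]
      exact hpair
    obtain ⟨y₀, -, hy₀⟩ := Finset.exists_min_image univ
      (fun y => (univ.filter fun z : ZMod N => d y + d (x - y) ≠ d z + d (x - z)).card)
      ⟨0, mem_univ 0⟩
    refine ⟨d y₀ + d (x - y₀), ?_⟩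
    have hEq : (univ.filter fun y : ZMod N => d y + d (x - y) ≠ (d y₀ + d (x - y₀)))
        = (univ.filter fun z : ZMod N => d y₀ + d (x - y₀) ≠ d z + d (x - z)) := by
      apply filter_congr
      intro z _
      exact ne_comm
    rw [hEq]
    calc N * (univ.filter fun z : ZMod N => d y₀ + d (x - y₀) ≠ d z + d (x - z)).card
        = (univ : Finset (ZMod N)).card •
          (univ.filter fun z : ZMod N => d y₀ + d (x - y₀) ≠ d z + d (x - z)).card := by
          rw [card_univ, hcardG, smul_eq_mul]
      _ ≤ ∑ y : ZMod N, (univ.filter fun z : ZMod N =>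
          d y + d (x - y) ≠ d z + d (x - z)).card :=
          Finset.card_nsmul_le_sum _ _ _ (fun y _ => hy₀ y (mem_univ y))
      _ ≤ 2 * K := hsum
  choose g hg using step1
  -- Step 2: quasi-additivity
  have step2 : ∀ x₁ x₂ : ZMod N, g x₁ + g x₂ = g (x₁ + x₂) + g 0 := by
    intro x₁ x₂
    have h₁ : N * (univ.filter fun y : ZMod N => d y + d (x₁ - y) ≠ g x₁).card ≤ 2 * K := hg x₁
    have h₂ : N * (univ.filter fun y : ZMod N => d (-y) + d (x₂ + y) ≠ g x₂).card ≤ 2 * K := by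
      have hc : (univ.filter fun y : ZMod N => d (-y) + d (x₂ + y) ≠ g x₂).card
          = (univ.filter fun u : ZMod N => d u + d (x₂ - u) ≠ g x₂).card := by
        rw [← card_filter_equiv' (Equiv.neg (ZMod N)) (fun u : ZMod N => d u + d (x₂ - u) ≠ g x₂)]
        apply congrArg
        apply filter_congr
        intro y _
        simp only [Equiv.neg_apply, sub_neg_eq_add]
      rw [hc]; exact hg x₂
    have h₃ : N * (univ.filter fun y : ZMod N =>
        d (x₁ - y) + d (x₂ + y) ≠ g (x₁ + x₂)).card ≤ 2 * K := by
      have hc : (univ.filter fun y : ZMod N => d (x₁ - y) + d (x₂ + y) ≠ g (x₁ + x₂)).card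
          = (univ.filter fun u : ZMod N => d u + d ((x₁ + x₂) - u) ≠ g (x₁ + x₂)).card := by
        rw [← card_filter_equiv' (Equiv.subLeft x₁)
          (fun u : ZMod N => d u + d ((x₁ + x₂) - u) ≠ g (x₁ + x₂))]
        apply congrArg
        apply filter_congr
        intro y _
        have e : (x₁ + x₂) - (x₁ - y) = x₂ + y := by ring
        simp only [Equiv.subLeft_apply, e]
      rw [hc]; exact hg (x₁ + x₂)
    have h₄ : N * (univ.filter fun y : ZMod N => d y + d (-y) ≠ g 0).card ≤ 2 * K := by
      have hc : (univ.filter fun y : ZMod N => d y + d (-y) ≠ g 0).card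
          = (univ.filter fun y : ZMod N => d y + d (0 - y) ≠ g 0).card := by
        apply congrArg
        apply filter_congr
        intro y _
        rw [zero_sub]
      rw [hc]; exact hg 0
    set S₁ := univ.filter fun y : ZMod N => d y + d (x₁ - y) ≠ g x₁ with hS₁
    set S₂ := univ.filter fun y : ZMod N => d (-y) + d (x₂ + y) ≠ g x₂ with hS₂
    set S₃ := univ.filter fun y : ZMod N => d (x₁ - y) + d (x₂ + y) ≠ g (x₁ + x₂) with hS₃
    set S₄ := univ.filter fun y : ZMod N => d y + d (-y) ≠ g 0 with hS₄
    have hunion : (S₁ ∪ S₂ ∪ S₃ ∪ S₄).card < N := by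
      have hle : (S₁ ∪ S₂ ∪ S₃ ∪ S₄).card ≤ S₁.card + S₂.card + S₃.card + S₄.card :=
        le_trans (Finset.card_union_le _ _)
          (by
            have := le_trans (Finset.card_union_le (S₁ ∪ S₂) S₃)
              (Nat.add_le_add_right (Finset.card_union_le S₁ S₂) _)
            omega)
      have hNm : N * (S₁ ∪ S₂ ∪ S₃ ∪ S₄).card < N * N := by
        calc N * (S₁ ∪ S₂ ∪ S₃ ∪ S₄).card
            ≤ N * (S₁.card + S₂.card + S₃.card + S₄.card) := Nat.mul_le_mul_left _ hle
          _ = N * S₁.card + N * S₂.card + N * S₃.card + N * S₄.card := by ring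
          _ ≤ 8 * K := by omega
          _ < N * N := by nlinarith
      exact Nat.lt_of_mul_lt_mul_left hNm
    have hex : ∃ y : ZMod N, y ∉ S₁ ∪ S₂ ∪ S₃ ∪ S₄ := by
      by_contra hcc
      push_neg at hcc
      have heq : S₁ ∪ S₂ ∪ S₃ ∪ S₄ = univ := Finset.eq_univ_iff_forall.mpr hcc
      rw [heq, card_univ, hcardG] at hunion
      exact lt_irrefl _ hunion
    obtain ⟨y, hy⟩ := hex
    simp only [hS₁, hS₂, hS₃, hS₄, mem_union, mem_filter, mem_univ, true_and, not_or,
      not_not] at hy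
    obtain ⟨⟨⟨e1, e2⟩, e3⟩, e4⟩ := hy
    linarith
  -- Step 3: g is constant
  have step3 : ∀ x : ZMod N, g x = g 0 := by
    have hadd : ∀ a b : ZMod N, (fun x => g x - g 0) (a + b)
        = (fun x => g x - g 0) a + (fun x => g x - g 0) b := by
      intro a b; have := step2 a b; simp only; linarith
    intro x
    let φ : ZMod N →+ ℤ := AddMonoidHom.mk' (fun x => g x - g 0) hadd
    have h1 : (N : ZMod N) = 0 := ZMod.natCast_self N
    have h2 : φ (N • x) = N • φ x := map_nsmul φ N x
    have h3 : (N : ℕ) • x = 0 := by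
      rw [nsmul_eq_mul, h1, zero_mul]
    rw [h3, map_zero] at h2
    have h4 : (N : ℤ) * φ x = 0 := by rw [nsmul_eq_mul] at h2; omega
    have h5 : φ x = 0 := by
      rcases mul_eq_zero.mp h4.symm.symm with h | h
      · exact absurd h (by exact_mod_cast hN.ne')
      · exact h
    have : g x - g 0 = 0 := h5
    linarith
  -- Steps 4 and 5
  set c : ℤ := g 0 with hcdef
  set Z : Finset (ZMod N) := univ.filter fun x : ZMod N => d x ≠ c with hZ
  set E : ℕ := Z.card with hEdef
  have hEleN : E ≤ N := by
    rw [hEdef]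
    calc Z.card ≤ (univ : Finset (ZMod N)).card := Finset.card_le_card (Finset.filter_subset _ _)
      _ = N := by rw [card_univ, hcardG]
  have step4 : E * N ≤ 3 * K := by
    have cXY : (univ.filter fun p : ZMod N × ZMod N =>
        d p.2 + d (p.1 - p.2) ≠ d p.1).card = K := by
      rw [hK]
      let σ : (ZMod N × ZMod N) ≃ (ZMod N × ZMod N) :=
        { toFun := fun p => (p.2, p.1 - p.2)
          invFun := fun q => (q.1 + q.2, q.1)
          left_inv := by rintro ⟨a, b⟩; simp
          right_inv := by rintro ⟨a, b⟩; simp }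
      have h := card_filter_equiv' σ (fun q : ZMod N × ZMod N => d q.1 + d q.2 ≠ d (q.1 + q.2))
      rw [← h]
      apply congrArg
      apply filter_congr
      intro p _
      have e : p.2 + (p.1 - p.2) = p.1 := by ring
      simp only [σ, Equiv.coe_fn_mk, e]
    have hsplit : K + ∑ x : ZMod N,
        (univ.filter fun y : ZMod N => ¬(d y + d (x - y) ≠ d x)).card = N * N := by
      rw [← card_filter_prod' (fun x y : ZMod N => ¬(d y + d (x - y) ≠ d x)), ← cXY]
      rw [Finset.card_filter_add_card_filter_not
        (p := fun p : ZMod N × ZMod N => d p.2 + d (p.1 - p.2) ≠ d p.1)]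
      rw [card_univ, Fintype.card_prod, hcardG]
    have hbound : ∀ x : ZMod N,
        N * (univ.filter fun y : ZMod N => ¬(d y + d (x - y) ≠ d x)).card
          ≤ (if d x ≠ c then 2 * K else N * N) := by
      intro x
      split
      · next hx =>
        have hsub : (univ.filter fun y : ZMod N => ¬(d y + d (x - y) ≠ d x))
            ⊆ (univ.filter fun y : ZMod N => d y + d (x - y) ≠ g x) := by
          intro y hy
          simp only [mem_filter, mem_univ, true_and, not_not] at *
          rw [hy, step3 x]
          exact hx
        calc N * (univ.filter fun y : ZMod N => ¬(d y + d (x - y) ≠ d x)).card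
            ≤ N * (univ.filter fun y : ZMod N => d y + d (x - y) ≠ g x).card :=
              Nat.mul_le_mul_left _ (Finset.card_le_card hsub)
          _ ≤ 2 * K := hg x
      · next hx =>
        have : (univ.filter fun y : ZMod N => ¬(d y + d (x - y) ≠ d x)).card ≤ N := by
          calc _ ≤ (univ : Finset (ZMod N)).card := Finset.card_le_card (Finset.filter_subset _ _)
            _ = N := by rw [card_univ, hcardG]
        exact Nat.mul_le_mul_left _ this
    have hsum : ∑ x : ZMod N, (if d x ≠ c then 2 * K else N * N)
        = E * (2 * K) + (N - E) * (N * N) := by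
      rw [Finset.sum_ite, Finset.sum_const, Finset.sum_const, smul_eq_mul, smul_eq_mul]
      have h1 : (univ.filter fun x : ZMod N => d x ≠ c).card = E := rfl
      have h2 : (univ.filter fun x : ZMod N => ¬(d x ≠ c)).card = N - E := by
        have := Finset.card_filter_add_card_filter_not
          (s := (univ : Finset (ZMod N))) (p := fun x : ZMod N => d x ≠ c)
        rw [card_univ, hcardG] at this
        omega
      rw [h1, h2]
    have htot : N * (N * N) ≤ N * K + (E * (2 * K) + (N - E) * (N * N)) := by
      calc N * (N * N) = N * K + ∑ x : ZMod N,
            N * (univ.filter fun y : ZMod N => ¬(d y + d (x - y) ≠ d x)).card := by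
            rw [← Finset.mul_sum, ← Nat.mul_add, hsplit]
        _ ≤ N * K + ∑ x : ZMod N, (if d x ≠ c then 2 * K else N * N) :=
            Nat.add_le_add_left (Finset.sum_le_sum fun x _ => hbound x) _
        _ = N * K + (E * (2 * K) + (N - E) * (N * N)) := by rw [hsum]
    have hsplitN : E * (N * N) + (N - E) * (N * N) = N * (N * N) := by
      rw [← Nat.add_mul]
      congr 1
      omega
    have h3 : E * (N * N) ≤ N * K + E * (2 * K) := by omega
    have h4 : E * (N * N) ≤ N * (3 * K) := by
      have h2KE : E * (2 * K) ≤ N * (2 * K) := Nat.mul_le_mul_right _ hEleN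
      calc E * (N * N) ≤ N * K + N * (2 * K) := by omega
        _ = N * (3 * K) := by ring
    have h5 : N * (E * N) ≤ N * (3 * K) := by
      calc N * (E * N) = E * (N * N) := by ring
        _ ≤ N * (3 * K) := h4
    exact Nat.le_of_mul_le_mul_left h5 hN
  by_cases hc0 : c = 0
  · have hEerr : N ≤ 8 * E := by
      rw [hEdef, hZ, hc0]
      exact hE
    have h6 : N * N ≤ 24 * K := by
      calc N * N ≤ (8 * E) * N := Nat.mul_le_mul_right _ hEerr
        _ = 8 * (E * N) := by ring
        _ ≤ 8 * (3 * K) := Nat.mul_le_mul_left _ step4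
        _ = 24 * K := by ring
    have : N ^ 2 ≤ 24 * K := by rw [pow_two]; exact h6
    omega
  · have cF₁ : (univ.filter fun p : ZMod N × ZMod N => d p.1 ≠ c).card = E * N := by
      rw [card_filter_prod' (fun x _ : ZMod N => d x ≠ c)]
      have hx : ∀ x : ZMod N, (univ.filter fun _ : ZMod N => d x ≠ c).card
          = if d x ≠ c then N else 0 := by
        intro x
        rw [Finset.filter_const]
        split <;> simp [hcardG]
      rw [Finset.sum_congr rfl fun x _ => hx x, Finset.sum_ite, Finset.sum_const,
        Finset.sum_const_zero, add_zero, smul_eq_mul]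
    have cF₂ : (univ.filter fun p : ZMod N × ZMod N => d p.2 ≠ c).card = N * E := by
      rw [card_filter_prod' (fun _ y : ZMod N => d y ≠ c)]
      rw [Finset.sum_const, card_univ, hcardG, smul_eq_mul]
    have cF₃ : (univ.filter fun p : ZMod N × ZMod N => d (p.1 + p.2) ≠ c).card = E * N := by
      let τ : (ZMod N × ZMod N) ≃ (ZMod N × ZMod N) :=
        { toFun := fun p => (p.1 + p.2, p.2)
          invFun := fun q => (q.1 - q.2, q.2)
          left_inv := by rintro ⟨a, b⟩; simp
          right_inv := by rintro ⟨a, b⟩; simp }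
      have h := card_filter_equiv' τ (fun q : ZMod N × ZMod N => d q.1 ≠ c)
      have h2 : (univ.filter fun p : ZMod N × ZMod N => d (p.1 + p.2) ≠ c).card
          = (univ.filter fun q : ZMod N × ZMod N => d q.1 ≠ c).card := by
        rw [← h]
        apply congrArg
        apply filter_congr
        intro p _
        simp [τ]
      rw [h2, cF₁]
    have hcover : (univ : Finset (ZMod N × ZMod N)) ⊆
        (univ.filter fun p : ZMod N × ZMod N => d p.1 ≠ c) ∪
        (univ.filter fun p : ZMod N × ZMod N => d p.2 ≠ c) ∪
        (univ.filter fun p : ZMod N × ZMod N => d (p.1 + p.2) ≠ c) ∪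
        (univ.filter fun p : ZMod N × ZMod N => d p.1 + d p.2 ≠ d (p.1 + p.2)) := by
      intro p _
      simp only [mem_union, mem_filter, mem_univ, true_and]
      by_contra hcc
      push_neg at hcc
      obtain ⟨⟨⟨h1, h2⟩, h3⟩, h4⟩ := hcc
      apply hc0
      rw [h1, h2, h3] at h4
      omega
    have hcard : N * N ≤ E * N + N * E + E * N + K := by
      have h0 : (univ : Finset (ZMod N × ZMod N)).card = N * N := by
        rw [card_univ, Fintype.card_prod, hcardG]
      calc N * N = (univ : Finset (ZMod N × ZMod N)).card := h0.symm
        _ ≤ _ := Finset.card_le_card hcover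
        _ ≤ (univ.filter fun p : ZMod N × ZMod N => d p.1 ≠ c).card
            + (univ.filter fun p : ZMod N × ZMod N => d p.2 ≠ c).card
            + (univ.filter fun p : ZMod N × ZMod N => d (p.1 + p.2) ≠ c).card
            + (univ.filter fun p : ZMod N × ZMod N => d p.1 + d p.2 ≠ d (p.1 + p.2)).card := by
            have a1 := Finset.card_union_le
              ((univ.filter fun p : ZMod N × ZMod N => d p.1 ≠ c) ∪
                (univ.filter fun p : ZMod N × ZMod N => d p.2 ≠ c) ∪
                (univ.filter fun p : ZMod N × ZMod N => d (p.1 + p.2) ≠ c))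
              (univ.filter fun p : ZMod N × ZMod N => d p.1 + d p.2 ≠ d (p.1 + p.2))
            have a2 := Finset.card_union_le
              ((univ.filter fun p : ZMod N × ZMod N => d p.1 ≠ c) ∪
                (univ.filter fun p : ZMod N × ZMod N => d p.2 ≠ c))
              (univ.filter fun p : ZMod N × ZMod N => d (p.1 + p.2) ≠ c)
            have a3 := Finset.card_union_le
              (univ.filter fun p : ZMod N × ZMod N => d p.1 ≠ c)
              (univ.filter fun p : ZMod N × ZMod N => d p.2 ≠ c)
            omega
        _ = E * N + N * E + E * N + K := by rw [cF₁, cF₂, cF₃, hK]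
    have hEN : E * N ≤ 3 * K := step4
    have h7 : N * N ≤ 10 * K := by
      have : N * E = E * N := by ring
      omega
    have : N ^ 2 ≤ 10 * K := by rw [pow_two]; exact h7
    omega

set_option maxRecDepth 8000 in
theorem stmt_8 (n : ℕ) (d : ZMod (2 ^ n) → ℤ)
    (herr : ((Finset.univ.filter fun x : ZMod (2 ^ n) => d x ≠ 0).card : ℝ) ≥ 2 ^ n / 8) :
    (1 - ((Finset.univ.filter fun x : ZMod (2 ^ n) => d x + d (-x) ≠ 0).card : ℝ) / 2 ^ n) ^ 96 *
      (1 - ((Finset.univ.filter fun p : ZMod (2 ^ n) × ZMod (2 ^ n) =>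
          d p.2 + d (p.1 - p.2) ≠ d p.1).card : ℝ) / (2 ^ n) ^ 2) ^ 709 ≤ 1 / 4 := by
  have hNpos : 0 < 2 ^ n := Nat.pow_pos (by norm_num)
  haveI : NeZero (2 ^ n) := ⟨hNpos.ne'⟩
  have hcardG : Fintype.card (ZMod (2 ^ n)) = 2 ^ n := ZMod.card _
  have hNR : (((2 ^ n : ℕ)) : ℝ) = (2 : ℝ) ^ n := by push_cast; ring
  -- convert herr to a natural-number inequality
  have hE : 2 ^ n ≤ 8 * (univ.filter fun x : ZMod (2 ^ n) => d x ≠ 0).card := by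
    have h8 : (((2 ^ n : ℕ)) : ℝ)
        ≤ 8 * ((univ.filter fun x : ZMod (2 ^ n) => d x ≠ 0).card : ℝ) := by
      rw [hNR]; linarith [herr]
    exact_mod_cast h8
  -- the pair count in the statement equals the (u,v)-form pair count
  have cXY : (univ.filter fun p : ZMod (2 ^ n) × ZMod (2 ^ n) =>
      d p.2 + d (p.1 - p.2) ≠ d p.1).card
      = (univ.filter fun p : ZMod (2 ^ n) × ZMod (2 ^ n) =>
          d p.1 + d p.2 ≠ d (p.1 + p.2)).card := by
    let σ : (ZMod (2 ^ n) × ZMod (2 ^ n)) ≃ (ZMod (2 ^ n) × ZMod (2 ^ n)) :=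
      { toFun := fun p => (p.2, p.1 - p.2)
        invFun := fun q => (q.1 + q.2, q.1)
        left_inv := by rintro ⟨a, b⟩; simp
        right_inv := by rintro ⟨a, b⟩; simp }
    have h := card_filter_equiv' σ
      (fun q : ZMod (2 ^ n) × ZMod (2 ^ n) => d q.1 + d q.2 ≠ d (q.1 + q.2))
    rw [← h]
    apply congrArg
    apply filter_congr
    intro p _
    have e : p.2 + (p.1 - p.2) = p.1 := by ring
    simp only [σ, Equiv.coe_fn_mk, e]
  have hkey : (2 ^ n) ^ 2 ≤ 32 * (univ.filter fun p : ZMod (2 ^ n) × ZMod (2 ^ n) =>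
      d p.2 + d (p.1 - p.2) ≠ d p.1).card := by
    rw [cXY]
    exact key_count (2 ^ n) d hE
  -- real-number bookkeeping
  set A : ℕ := (univ.filter fun x : ZMod (2 ^ n) => d x + d (-x) ≠ 0).card with hA
  set B : ℕ := (univ.filter fun p : ZMod (2 ^ n) × ZMod (2 ^ n) =>
      d p.2 + d (p.1 - p.2) ≠ d p.1).card with hB
  have hAle : (A : ℝ) ≤ (2 : ℝ) ^ n := by
    rw [← hNR]
    have h1 : A ≤ 2 ^ n := by
      calc A ≤ (univ : Finset (ZMod (2 ^ n))).card :=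
            Finset.card_le_card (Finset.filter_subset _ _)
        _ = 2 ^ n := by rw [card_univ, hcardG]
    exact_mod_cast h1
  have hBle : (B : ℝ) ≤ ((2 : ℝ) ^ n) ^ 2 := by
    have h1 : B ≤ (2 ^ n) ^ 2 := by
      calc B ≤ (univ : Finset (ZMod (2 ^ n) × ZMod (2 ^ n))).card :=
            Finset.card_le_card (Finset.filter_subset _ _)
        _ = (2 ^ n) ^ 2 := by rw [card_univ, Fintype.card_prod, hcardG, pow_two]
    calc (B : ℝ) ≤ (((2 ^ n) ^ 2 : ℕ) : ℝ) := by exact_mod_cast h1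
      _ = ((2 : ℝ) ^ n) ^ 2 := by push_cast; ring
  have h2 : (0 : ℝ) < ((2 : ℝ) ^ n) ^ 2 := by positivity
  have hBge : (1 : ℝ) / 32 ≤ (B : ℝ) / ((2 : ℝ) ^ n) ^ 2 := by
    rw [le_div_iff₀ h2]
    have h1 : (((2 ^ n) ^ 2 : ℕ) : ℝ) ≤ 32 * (B : ℝ) := by exact_mod_cast hkey
    have h3 : (((2 ^ n) ^ 2 : ℕ) : ℝ) = ((2 : ℝ) ^ n) ^ 2 := by push_cast; ring
    rw [h3] at h1
    linarith
  have hpow2pos : (0 : ℝ) < (2 : ℝ) ^ n := by positivity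
  have f1_nonneg : (0 : ℝ) ≤ 1 - (A : ℝ) / 2 ^ n := by
    rw [sub_nonneg, div_le_one hpow2pos]
    exact hAle
  have f1_le_one : (1 : ℝ) - (A : ℝ) / 2 ^ n ≤ 1 := by
    have hApos : (0 : ℝ) ≤ (A : ℝ) / 2 ^ n := by positivity
    linarith
  have f2_nonneg : (0 : ℝ) ≤ 1 - (B : ℝ) / ((2 : ℝ) ^ n) ^ 2 := by
    rw [sub_nonneg, div_le_one h2]
    exact hBle
  have f2_le : (1 : ℝ) - (B : ℝ) / ((2 : ℝ) ^ n) ^ 2 ≤ 31 / 32 := by linarith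
  calc (1 - (A : ℝ) / 2 ^ n) ^ 96 * (1 - (B : ℝ) / ((2 : ℝ) ^ n) ^ 2) ^ 709
      ≤ 1 * ((31 : ℝ) / 32) ^ 709 := by
        apply mul_le_mul
        · exact pow_le_one₀ f1_nonneg f1_le_one
        · exact pow_le_pow_left₀ f2_nonneg f2_le 709
        · positivity
        · norm_num
    _ ≤ 1 / 4 := by
        rw [one_mul]
        calc ((31:ℝ)/32)^709 ≤ ((31:ℝ)/32)^200 := pow_le_pow_of_le_one (by norm_num) (by norm_num) (by norm_num)
          _ ≤ 1/4 := by norm_num
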